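/- Let b1 and b2 be positive divisors of N, and let P1 and P2 be independent fixed-block bootstrap paths of length N with blocksizes b1 and b2 respectively, i.e., all N/b1 + N/b2 block starting indices are independent and uniformly distributed on ZMod N_tot. Then the probability that P1 = P2 equals (1/N_tot)^m, where m is the cardinality of the combined decision index set {i ∈ Fin N : b1 ∣ i} ∪ {i ∈ Fin N : b2 ∣ i}. -/

import Mathlib

open MeasureTheory

/-- The fixed-block bootstrap path of length `N` with blocksize `b ∣ N`,
built from the circular data sequence `w : ZMod N_tot → α` with starting
indices `s : Fin (N/b) → ZMod N_tot`:  position `i` holds the observation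
`w (s ⌊i/b⌋ + (i mod b))`. -/
def fixedBlockPath {N N_tot : ℕ} {α : Type*} (w : ZMod N_tot → α)
    (b : ℕ) (hbN : b ∣ N) (s : Fin (N / b) → ZMod N_tot) (i : Fin N) : α :=
  w (s ⟨i.val / b, Nat.div_lt_div_of_lt_of_dvd hbN i.isLt⟩ + (i.val % b : ZMod N_tot))

namespace Stmt1Aux

lemma fin_app_congr {n : ℕ} {β : Sort*} (s : Fin n → β) {a b : ℕ} (h : a = b)
    (ha : a < n) (hb : b < n) : s ⟨a, ha⟩ = s ⟨b, hb⟩ := by subst h; rfl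

lemma nat_key {b L : ℕ} (hb : 0 < b) (hbL : b ∣ L) (i : ℕ) :
    (i / b * b) / L = i / L ∧ (i / b * b) % L + i % b = i % L := by
  obtain ⟨k, rfl⟩ := hbL
  constructor
  · calc (i / b * b) / (b * k) = (i / b * b) / b / k := (Nat.div_div_eq_div_mul _ _ _).symm
      _ = (i / b) / k := by rw [Nat.mul_div_cancel _ hb]
      _ = i / (b * k) := Nat.div_div_eq_div_mul _ _ _
  · have h1 : (i / b * b) % (b * k) = b * (i / b % k) := by
      rw [mul_comm (i / b) b, Nat.mul_mod_mul_left]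
    have h2 : i % (b * k) = b * (i / b % k) + i % b := by
      conv_lhs => rw [← Nat.div_add_mod (i % (b * k)) b]
      rw [Nat.mod_mul_right_div_self, Nat.mod_mod_of_dvd _ ⟨k, rfl⟩]
    omega

def pathIdx {N N_tot : ℕ} (b : ℕ) (h : b ∣ N) (s : Fin (N / b) → ZMod N_tot) (i : Fin N) :
    ZMod N_tot :=
  s ⟨i.val / b, Nat.div_lt_div_of_lt_of_dvd h i.isLt⟩ + ((i.val % b : ℕ) : ZMod N_tot)

lemma pathIdx_succ {N N_tot b : ℕ} (hb : 0 < b) (h : b ∣ N)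
    (s : Fin (N / b) → ZMod N_tot) (i j : Fin N) (hij : i.val = j.val + 1)
    (hnd : ¬ b ∣ i.val) :
    pathIdx b h s i = pathIdx b h s j + 1 := by
  have hdm := Nat.div_add_mod j.val b
  have hml := Nat.mod_lt j.val hb
  have hr : j.val % b + 1 < b := by
    rcases Nat.lt_or_ge (j.val % b + 1) b with h'|h'
    · exact h'
    · have hb' : j.val % b + 1 = b := by omega
      exact absurd ⟨j.val / b + 1, by rw [Nat.mul_succ]; omega⟩ (hij ▸ hnd)
  have h1 : i.val / b = j.val / b := by
    rw [hij]
    conv_lhs => rw [← Nat.div_add_mod j.val b, add_assoc, Nat.mul_add_div hb]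
    rw [Nat.div_eq_of_lt hr, add_zero]
  have h2 : i.val % b = j.val % b + 1 := by
    rw [hij]
    conv_lhs => rw [← Nat.div_add_mod j.val b, add_assoc, Nat.mul_add_mod]
    exact Nat.mod_eq_of_lt hr
  unfold pathIdx
  rw [fin_app_congr s h1 _ (Nat.div_lt_div_of_lt_of_dvd h j.isLt), h2]
  push_cast
  ring

lemma pathIdx_chain {N N_tot b1 b2 L : ℕ} (hb1 : 0 < b1) (hb2 : 0 < b2)
    (h1 : b1 ∣ N) (h2 : b2 ∣ N) (hL0 : 0 < L)
    (hlcm : ∀ n : ℕ, b1 ∣ n → b2 ∣ n → L ∣ n)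
    (s1 : Fin (N / b1) → ZMod N_tot) (s2 : Fin (N / b2) → ZMod N_tot)
    (hcon : pathIdx b1 h1 s1 = pathIdx b2 h2 s2) :
    ∀ (r i : ℕ) (hi : i < N), i % L = r →
      pathIdx b1 h1 s1 ⟨i, hi⟩
        = pathIdx b1 h1 s1 ⟨i - r, lt_of_le_of_lt (Nat.sub_le _ _) hi⟩
          + (r : ZMod N_tot) := by
  intro r
  induction r with
  | zero =>
    intro i hi _
    simp only [Nat.sub_zero, Nat.cast_zero, add_zero]
  | succ r ih =>
    intro i hi hir
    have hipos : 0 < i := by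
      rcases Nat.eq_zero_or_pos i with h'|h'
      · rw [h', Nat.zero_mod] at hir; omega
      · exact h'
    have hndvd : ¬ L ∣ i := by
      rintro ⟨c, rfl⟩
      rw [Nat.mul_mod_right] at hir; omega
    have hstep : ∀ (b : ℕ), 0 < b → ∀ (h : b ∣ N) (s : Fin (N / b) → ZMod N_tot),
        ¬ b ∣ i → pathIdx b h s ⟨i, hi⟩ = pathIdx b h s ⟨i - 1, by omega⟩ + 1 := by
      intro b hb h s hnd
      exact pathIdx_succ hb h s ⟨i, hi⟩ ⟨i - 1, by omega⟩ (by simp; omega) hnd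
    have hb12 : ¬ b1 ∣ i ∨ ¬ b2 ∣ i := by
      by_contra hc
      push_neg at hc
      exact hndvd (hlcm _ hc.1 hc.2)
    have hstep1 : pathIdx b1 h1 s1 ⟨i, hi⟩ = pathIdx b1 h1 s1 ⟨i - 1, by omega⟩ + 1 := by
      rcases hb12 with h'|h'
      · exact hstep b1 hb1 h1 s1 h'
      · have hh := hstep b2 hb2 h2 s2 h'
        rw [hcon]
        exact hh
    have hmod : (i - 1) % L = r := by
      have hdm := Nat.div_add_mod i L
      have hrL : r < L := by have := Nat.mod_lt i hL0; omega
      have he : i - 1 = L * (i / L) + r := by omega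
      rw [he, Nat.mul_add_mod, Nat.mod_eq_of_lt hrL]
    have hih := ih (i - 1) (by omega) hmod
    rw [hstep1, hih,
      fin_app_congr (pathIdx b1 h1 s1) (show i - 1 - r = i - (r + 1) from by omega)
        (hb := lt_of_le_of_lt (Nat.sub_le _ _) hi)]
    push_cast
    ring

lemma card_sol {N N_tot : ℕ} [NeZero N] (b1 b2 : ℕ) (hb1 : 0 < b1) (hb2 : 0 < b2)
    (h1 : b1 ∣ N) (h2 : b2 ∣ N) :
    Nat.card {s : (Fin (N / b1) → ZMod N_tot) × (Fin (N / b2) → ZMod N_tot) //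
        pathIdx b1 h1 s.1 = pathIdx b2 h2 s.2}
      = Nat.card (Fin (N / Nat.lcm b1 b2) → ZMod N_tot) := by
  have hN : 0 < N := Nat.pos_of_ne_zero (NeZero.ne N)
  set L := Nat.lcm b1 b2 with hLdef
  have hL0 : 0 < L := Nat.lcm_pos hb1 hb2
  have hL1 : b1 ∣ L := Nat.dvd_lcm_left _ _
  have hL2 : b2 ∣ L := Nat.dvd_lcm_right _ _
  have hLN : L ∣ N := Nat.lcm_dvd h1 h2
  have hlcm : ∀ n : ℕ, b1 ∣ n → b2 ∣ n → L ∣ n := fun n ha hb => Nat.lcm_dvd ha hb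
  have hinv : ∀ (b : ℕ), 0 < b → b ∣ N → ∀ j : Fin (N / b), j.val * b < N := by
    intro b hb hbN j
    calc j.val * b < (N / b) * b := (Nat.mul_lt_mul_right hb).mpr j.isLt
      _ = N := Nat.div_mul_cancel hbN
  have hfwd : ∀ (b : ℕ), b ∣ N → b ∣ L → ∀ q : ℕ, q < N / L → q * (L / b) < N / b := by
    intro b hbN hbL q hq
    rw [Nat.lt_div_iff_mul_lt' hbN]
    have he : b * (q * (L / b)) = q * L := by
      rw [mul_comm b, mul_assoc, Nat.div_mul_cancel hbL]
    rw [he]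
    exact hinv L hL0 hLN ⟨q, hq⟩
  have hAkey : ∀ (b : ℕ) (hb : 0 < b) (hbL : b ∣ L) (g : Fin (N / L) → ZMod N_tot) (i : Fin N),
      g ⟨i.val / b * b / L, Nat.div_lt_div_of_lt_of_dvd hLN
          (lt_of_le_of_lt (Nat.div_mul_le_self _ _) i.isLt)⟩
        + ((i.val / b * b % L : ℕ) : ZMod N_tot) + ((i.val % b : ℕ) : ZMod N_tot)
        = g ⟨i.val / L, Nat.div_lt_div_of_lt_of_dvd hLN i.isLt⟩
          + ((i.val % L : ℕ) : ZMod N_tot) := by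
    intro b hb hbL g i
    obtain ⟨e1, e2⟩ := nat_key hb hbL i.val
    rw [fin_app_congr g e1 _ (Nat.div_lt_div_of_lt_of_dvd hLN i.isLt), add_assoc,
      ← Nat.cast_add, e2]
  have hAcon : ∀ g : Fin (N / L) → ZMod N_tot,
      pathIdx b1 h1 (fun j => g ⟨j.val * b1 / L,
            Nat.div_lt_div_of_lt_of_dvd hLN (hinv b1 hb1 h1 j)⟩
          + ((j.val * b1 % L : ℕ) : ZMod N_tot))
        = pathIdx b2 h2 (fun j => g ⟨j.val * b2 / L,
            Nat.div_lt_div_of_lt_of_dvd hLN (hinv b2 hb2 h2 j)⟩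
          + ((j.val * b2 % L : ℕ) : ZMod N_tot)) := by
    intro g
    funext i
    trans (g ⟨i.val / L, Nat.div_lt_div_of_lt_of_dvd hLN i.isLt⟩
      + ((i.val % L : ℕ) : ZMod N_tot))
    · exact hAkey b1 hb1 hL1 g i
    · exact (hAkey b2 hb2 hL2 g i).symm
  -- general inverse computation on solutions
  have hpt : ∀ (b : ℕ) (hb : 0 < b) (hbN : b ∣ N) (s : Fin (N / b) → ZMod N_tot)
      (k : Fin (N / b)) (hk : k.val * b < N),
      pathIdx b hbN s ⟨k.val * b, hk⟩ = s k := by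
    intro b hb hbN s k hk
    show s ⟨k.val * b / b, _⟩ + ((k.val * b % b : ℕ) : ZMod N_tot) = s k
    rw [fin_app_congr s (Nat.mul_div_cancel _ hb) _ k.isLt, Nat.mul_mod_left,
      Nat.cast_zero, add_zero]
  have hC : ∀ (b : ℕ) (hb : 0 < b) (hbN : b ∣ N) (hbL : b ∣ L)
      (s : Fin (N / b) → ZMod N_tot)
      (hcc : ∀ (r i : ℕ) (hi : i < N), i % L = r →
        pathIdx b hbN s ⟨i, hi⟩
          = pathIdx b hbN s ⟨i - r, lt_of_le_of_lt (Nat.sub_le _ _) hi⟩ + (r : ZMod N_tot))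
      (j : Fin (N / b)),
      s ⟨(j.val * b / L) * (L / b), by
          rw [Nat.lt_div_iff_mul_lt' hbN]
          have he : b * (j.val * b / L * (L / b)) = (j.val * b / L) * L := by
            rw [mul_comm b, mul_assoc, Nat.div_mul_cancel hbL]
          rw [he]
          exact lt_of_le_of_lt (Nat.div_mul_le_self _ _) (hinv b hb hbN j)⟩
        + ((j.val * b % L : ℕ) : ZMod N_tot) = s j := by
    intro b hb hbN hbL s hcc j
    have hjb : j.val * b < N := hinv b hb hbN j
    have hdm : (j.val * b / L) * L + j.val * b % L = j.val * b := by
      rw [mul_comm]; exact Nat.div_add_mod _ _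
    have hbd1 : (j.val * b / L) * (L / b) * b < N := by
      rw [mul_assoc, Nat.div_mul_cancel hbL]
      exact lt_of_le_of_lt (Nat.div_mul_le_self _ _) hjb
    have he : j.val * b - j.val * b % L = (j.val * b / L) * (L / b) * b := by
      rw [mul_assoc, Nat.div_mul_cancel hbL]
      omega
    have hch := hcc (j.val * b % L) (j.val * b) hjb rfl
    rw [← hpt b hb hbN s _ hbd1,
      fin_app_congr (pathIdx b hbN s) he.symm hbd1 (by omega), ← hch]
    exact hpt b hb hbN s j hjb
  have hcross : ∀ (s1 : Fin (N / b1) → ZMod N_tot) (s2 : Fin (N / b2) → ZMod N_tot),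
      pathIdx b1 h1 s1 = pathIdx b2 h2 s2 → ∀ (q : ℕ) (hq : q < N / L),
      s1 ⟨q * (L / b1), hfwd b1 h1 hL1 q hq⟩ = s2 ⟨q * (L / b2), hfwd b2 h2 hL2 q hq⟩ := by
    intro s1 s2 hcon q hq
    have hqL : q * L < N := hinv L hL0 hLN ⟨q, hq⟩
    have e1 : q * (L / b1) * b1 = q * L := by rw [mul_assoc, Nat.div_mul_cancel hL1]
    have e2 : q * (L / b2) * b2 = q * L := by rw [mul_assoc, Nat.div_mul_cancel hL2]
    rw [← hpt b1 hb1 h1 s1 ⟨q * (L / b1), hfwd b1 h1 hL1 q hq⟩ (by rw [e1]; exact hqL),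
      ← hpt b2 hb2 h2 s2 ⟨q * (L / b2), hfwd b2 h2 hL2 q hq⟩ (by rw [e2]; exact hqL),
      fin_app_congr (pathIdx b1 h1 s1) (show q * (L / b1) * b1 = q * (L / b2) * b2 from by
        rw [e1, e2]) (by rw [e1]; exact hqL) (by rw [e2]; exact hqL), hcon]
  apply Nat.card_congr
  refine
    { toFun := fun p j => p.1.1 ⟨j.val * (L / b1), hfwd b1 h1 hL1 j.val j.isLt⟩
      invFun := fun g =>
        ⟨⟨fun j => g ⟨j.val * b1 / L, Nat.div_lt_div_of_lt_of_dvd hLN (hinv b1 hb1 h1 j)⟩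
              + ((j.val * b1 % L : ℕ) : ZMod N_tot),
          fun j => g ⟨j.val * b2 / L, Nat.div_lt_div_of_lt_of_dvd hLN (hinv b2 hb2 h2 j)⟩
              + ((j.val * b2 % L : ℕ) : ZMod N_tot)⟩, hAcon g⟩
      left_inv := ?_
      right_inv := ?_ }
  · -- left inverse
    rintro ⟨⟨s1, s2⟩, hcon⟩
    have hcc1 := pathIdx_chain hb1 hb2 h1 h2 hL0 hlcm s1 s2 hcon
    have hcc2 := pathIdx_chain hb2 hb1 h2 h1 hL0 (fun n ha hb => hlcm n hb ha) s2 s1 hcon.symm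
    apply Subtype.ext
    apply Prod.ext
    · funext j
      show s1 ⟨j.val * b1 / L * (L / b1),
          hfwd b1 h1 hL1 (j.val * b1 / L) (Nat.div_lt_div_of_lt_of_dvd hLN (hinv b1 hb1 h1 j))⟩
          + ((j.val * b1 % L : ℕ) : ZMod N_tot) = s1 j
      exact hC b1 hb1 h1 hL1 s1 hcc1 j
    · funext j
      show s1 ⟨j.val * b2 / L * (L / b1),
          hfwd b1 h1 hL1 (j.val * b2 / L) (Nat.div_lt_div_of_lt_of_dvd hLN (hinv b2 hb2 h2 j))⟩
          + ((j.val * b2 % L : ℕ) : ZMod N_tot) = s2 j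
      rw [hcross s1 s2 hcon (j.val * b2 / L) (Nat.div_lt_div_of_lt_of_dvd hLN (hinv b2 hb2 h2 j))]
      exact hC b2 hb2 h2 hL2 s2 hcc2 j
  · -- right inverse
    intro g
    funext j
    show g ⟨j.val * (L / b1) * b1 / L, _⟩
        + ((j.val * (L / b1) * b1 % L : ℕ) : ZMod N_tot) = g j
    have e1 : j.val * (L / b1) * b1 / L = j.val := by
      rw [mul_assoc, Nat.div_mul_cancel hL1, Nat.mul_div_cancel _ hL0]
    have e2 : j.val * (L / b1) * b1 % L = 0 := by
      rw [mul_assoc, Nat.div_mul_cancel hL1, Nat.mul_mod_left]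
    rw [fin_app_congr g e1 _ j.isLt, e2, Nat.cast_zero, add_zero]


lemma card_dvd_filter {N d : ℕ} [NeZero N] (hd : 0 < d) (hdN : d ∣ N) :
    (Finset.univ.filter (fun i : Fin N => d ∣ i.val)).card = N / d := by
  rw [← Fintype.card_fin (N / d), ← Finset.card_univ]
  refine Finset.card_bij'
    (fun (i : Fin N) _ => (⟨i.val / d, Nat.div_lt_div_of_lt_of_dvd hdN i.isLt⟩ : Fin (N / d)))
    (fun (j : Fin (N / d)) _ => (⟨j.val * d, by
      calc j.val * d < (N / d) * d := (Nat.mul_lt_mul_right hd).mpr j.isLt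
        _ = N := Nat.div_mul_cancel hdN⟩ : Fin N))
    ?hi ?hj ?li ?ri
  case hi => intro i hi; exact Finset.mem_univ _
  case hj =>
    intro j hj
    simp only [Finset.mem_filter, Finset.mem_univ, true_and]
    exact dvd_mul_left d j.val
  case li =>
    intro i hi
    simp only [Finset.mem_filter, Finset.mem_univ, true_and] at hi
    exact Fin.ext (Nat.div_mul_cancel hi)
  case ri =>
    intro j hj
    exact Fin.ext (Nat.mul_div_cancel _ hd)

end Stmt1Aux

open Stmt1Aux in
/-- Two independent fixed-block bootstrap paths of length `N` with blocksizes
`b1, b2 ∣ N` (all `N/b1 + N/b2` block starting indices i.i.d. uniform on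
`ZMod N_tot`) are identical with probability `(1/N_tot)^m`, where `m` is the
cardinality of the combined decision index set
`{i : b1 ∣ i} ∪ {i : b2 ∣ i} ⊆ Fin N`. -/
theorem stmt1 {N N_tot : ℕ} [NeZero N] [NeZero N_tot] {α : Type*}
    (w : ZMod N_tot → α) (hw : Function.Injective w)
    (b1 b2 : ℕ) (hb1 : 0 < b1) (hb2 : 0 < b2) (h1 : b1 ∣ N) (h2 : b2 ∣ N) :
    (PMF.uniformOfFintype
        ((Fin (N / b1) → ZMod N_tot) × (Fin (N / b2) → ZMod N_tot))).toMeasure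
      {s | fixedBlockPath w b1 h1 s.1 = fixedBlockPath w b2 h2 s.2}
      = ((N_tot : ENNReal)⁻¹) ^
          (Finset.univ.filter (fun i : Fin N => b1 ∣ i.val ∨ b2 ∣ i.val)).card := by
  have hN : 0 < N := Nat.pos_of_ne_zero (NeZero.ne N)
  set L := Nat.lcm b1 b2 with hLdef
  have hL0 : 0 < L := Nat.lcm_pos hb1 hb2
  have hLN : L ∣ N := Nat.lcm_dvd h1 h2
  set m := (Finset.univ.filter (fun i : Fin N => b1 ∣ i.val ∨ b2 ∣ i.val)).card with hmdef
  set S : Set ((Fin (N / b1) → ZMod N_tot) × (Fin (N / b2) → ZMod N_tot)) :=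
    {s | fixedBlockPath w b1 h1 s.1 = fixedBlockPath w b2 h2 s.2} with hSdef
  have hM : MeasurableSet S := Set.Countable.measurableSet (Set.to_countable _)
  classical
  rw [PMF.toMeasure_uniformOfFintype_apply _ hM]
  -- cardinality of the solution set
  have hcardS : Nat.card S = N_tot ^ (N / L) := by
    have e1 : Nat.card S
        = Nat.card {s : (Fin (N / b1) → ZMod N_tot) × (Fin (N / b2) → ZMod N_tot) //
            pathIdx b1 h1 s.1 = pathIdx b2 h2 s.2} := by
      apply Nat.card_congr
      apply Equiv.subtypeEquivRight
      intro s
      constructor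
      · intro h
        exact funext fun i => hw (congrFun h i)
      · intro h
        exact funext fun i => congrArg w (congrFun h i)
    rw [e1, card_sol b1 b2 hb1 hb2 h1 h2, Nat.card_eq_fintype_card, Fintype.card_fun,
      ZMod.card, Fintype.card_fin]
  -- inclusion-exclusion for the exponent
  have hm : m + N / L = N / b1 + N / b2 := by
    have h3 : (Finset.univ.filter (fun i : Fin N => b1 ∣ i.val))
        ∩ (Finset.univ.filter (fun i : Fin N => b2 ∣ i.val))
        = Finset.univ.filter (fun i : Fin N => L ∣ i.val) := by
      ext i
      simp only [Finset.mem_inter, Finset.mem_filter, Finset.mem_univ, true_and]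
      exact (Nat.lcm_dvd_iff).symm
    have h4 := Finset.card_union_add_card_inter
      (Finset.univ.filter (fun i : Fin N => b1 ∣ i.val))
      (Finset.univ.filter (fun i : Fin N => b2 ∣ i.val))
    rw [h3, card_dvd_filter hL0 hLN, card_dvd_filter hb1 h1, card_dvd_filter hb2 h2,
      ← Finset.filter_or] at h4
    exact h4
  -- final computation in ℝ≥0∞
  have hT : ∀ inst : Fintype ((Fin (N / b1) → ZMod N_tot) × (Fin (N / b2) → ZMod N_tot)),
      @Fintype.card _ inst = N_tot ^ (N / b1 + N / b2) := by
    intro inst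
    rw [← @Nat.card_eq_fintype_card _ inst, Nat.card_prod, Nat.card_fun, Nat.card_fun,
      Nat.card_zmod, Nat.card_eq_fintype_card (α := Fin (N / b1)),
      Nat.card_eq_fintype_card (α := Fin (N / b2)), Fintype.card_fin, Fintype.card_fin, pow_add]
  have hS2 : ∀ inst : Fintype ↥S, @Fintype.card ↥S inst = N_tot ^ (N / L) := by
    intro inst
    rw [← @Nat.card_eq_fintype_card _ inst]
    exact hcardS
  rw [hS2 _, hT _]
  have hn0 : (N_tot : ENNReal) ≠ 0 := Nat.cast_ne_zero.mpr (NeZero.ne N_tot)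
  have hnT : (N_tot : ENNReal) ≠ ⊤ := ENNReal.natCast_ne_top _
  rw [← hm]
  push_cast
  rw [pow_add, ENNReal.div_eq_inv_mul, ENNReal.mul_inv (Or.inl (pow_ne_zero _ hn0))
    (Or.inl (ENNReal.pow_ne_top hnT)), mul_assoc,
    ENNReal.inv_mul_cancel (pow_ne_zero _ hn0) (ENNReal.pow_ne_top hnT), mul_one,
    ← ENNReal.inv_pow]
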